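/- Let P be a finite poset, C a complete abelian closed symmetric monoidal category, M a P-module, and N ≅ ∏_{a ∈ P} X_a^{↓a} a cofree P-module. Then Hom̲(M, N) ≅ ∏_{a ∈ P} IHom(M(a), X_a). -/

import Mathlib

open CategoryTheory CategoryTheory.Limits CategoryTheory.MonoidalCategory Opposite

universe v u

variable {P : Type} [PartialOrder P] {C : Type u} [Category.{v} C]

open Classical ZeroObject in
/-- The principal cofree `P`-module `X^{↓a}`: equal to `X` at all `b ≤ a`, with identity
structure maps there, and `0` elsewhere. -/
noncomputable def below [HasZeroObject C] [HasZeroMorphisms C] (a : P) (X : C) : P ⥤ C where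
  obj b := if b ≤ a then X else 0
  map {b c} h :=
    if hc : c ≤ a then
      eqToHom (show (if b ≤ a then X else 0) = (if c ≤ a then X else 0) by
        rw [if_pos ((leOfHom h).trans hc), if_pos hc])
    else 0
  map_id b := by
    try dsimp only
    split_ifs with h
    · simp
    · exact (((Limits.isZero_zero C).of_iso (eqToIso (if_neg h))).eq_of_src _ _)
  map_comp {b c d} h h' := by
    try dsimp only
    by_cases hd : d ≤ a
    · have hc : c ≤ a := (leOfHom h').trans hd
      simp [dif_pos hd, dif_pos hc]
    · simp [dif_neg hd]

/-- The integrand `(a, b) ↦ IHom(M a, N b)` of the end defining the enriched hom. -/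
def integrand [MonoidalCategory C] [MonoidalClosed C] (M N : P ⥤ C) : Pᵒᵖ ⥤ P ⥤ C :=
  M.op ⋙ MonoidalClosed.internalHom ⋙ (Functor.whiskeringLeft P C C).obj N

/-- The enriched hom `Hom̲(M, N) := ∫_{a ∈ P} IHom(M a, N a)`. -/
noncomputable def ehom [MonoidalCategory C] [MonoidalClosed C] [HasLimits C]
    (M N : P ⥤ C) : C :=
  end_ (integrand M N)


set_option linter.unusedSectionVars false

section Aux
variable [HasZeroObject C] [HasZeroMorphisms C]

lemma below_obj_eq {a b : P} (h : b ≤ a) (Xa : C) : (below a Xa).obj b = Xa := by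
  simp only [below, if_pos h]

lemma below_obj_isZero {a b : P} (h : ¬ b ≤ a) (Xa : C) : IsZero ((below a Xa).obj b) := by
  simp only [below, if_neg h]
  exact isZero_zero C

lemma below_map_eq {a b c : P} (hc : c ≤ a) (h : b ⟶ c) (Xa : C) :
    (below a Xa).map h ≫ eqToHom (below_obj_eq hc Xa) =
      eqToHom (below_obj_eq ((leOfHom h).trans hc) Xa) := by
  simp [below, dif_pos hc]
  exact eqToHom_trans _ _

end Aux

section Main
variable [Fintype P] [Abelian C] [MonoidalCategory C] [SymmetricCategory C]
  [MonoidalClosed C] [HasLimits C] (M : P ⥤ C) (X : P → C)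

/-- morphisms into `IHom(A, Z)` with `Z` a zero object agree. -/
lemma ihom_obj_hom_ext {A Z : C} (hZ : IsZero Z) {Y : C}
    (f g : Y ⟶ (ihom A).obj Z) : f = g := by
  letI : PreservesLimitsOfSize.{0,0} (ihom A) :=
    (ihom.adjunction A).rightAdjoint_preservesLimits
  exact (IsTerminal.isTerminalObj (ihom A) Z hZ.isTerminal).hom_ext f g

noncomputable def fwd (N : P ⥤ C) (e : N ≅ ∏ᶜ fun a => below a (X a)) :
    ehom M N ⟶ ∏ᶜ fun a => (ihom (M.obj a)).obj (X a) :=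
  Pi.lift fun a => end_.π (integrand M N) a ≫ (ihom (M.obj a)).map
    (e.hom.app a ≫ (Pi.π (fun c => below c (X c)) a).app a ≫
      eqToHom (below_obj_eq le_rfl (X a)))

open Classical in
noncomputable def cmpP (a b : P) :
    (∏ᶜ fun c => (ihom (M.obj c)).obj (X c)) ⟶
      (ihom (M.obj b)).obj ((below a (X a)).obj b) :=
  if h : b ≤ a then
    Pi.π _ a ≫ (MonoidalClosed.pre (M.map h.hom)).app (X a) ≫
      (ihom (M.obj b)).map (eqToHom (below_obj_eq h (X a)).symm)
  else 0

noncomputable def iso1 (b : P) :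
    (∏ᶜ fun a => below a (X a) : P ⥤ C).obj b ≅ ∏ᶜ fun a => (below a (X a)).obj b :=
  asIso (piComparison ((evaluation P C).obj b) _)

noncomputable def iso2 (b c : P) :
    (ihom (M.obj b)).obj (∏ᶜ fun a => (below a (X a)).obj c) ≅
      ∏ᶜ fun a => (ihom (M.obj b)).obj ((below a (X a)).obj c) := by
  letI : PreservesLimitsOfSize.{0,0} (ihom (M.obj b)) :=
    (ihom.adjunction (M.obj b)).rightAdjoint_preservesLimits
  exact asIso (piComparison (ihom (M.obj b)) _)

noncomputable def psi (N : P ⥤ C) (e : N ≅ ∏ᶜ fun a => below a (X a)) (b : P) :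
    (∏ᶜ fun c => (ihom (M.obj c)).obj (X c)) ⟶ (ihom (M.obj b)).obj (N.obj b) :=
  Pi.lift (fun a => cmpP M X a b) ≫ (iso2 M X b b).inv ≫
    (ihom (M.obj b)).map ((iso1 X b).inv ≫ e.inv.app b)

lemma iso1_fact (b : P) (a : P) :
    (iso1 X b).inv ≫ (Pi.π (fun c => below c (X c)) a).app b =
      Pi.π (fun c => (below c (X c)).obj b) a := by
  rw [Iso.inv_comp_eq]
  exact (piComparison_comp_π ((evaluation P C).obj b) (fun c => below c (X c)) a).symm

lemma iso2_fact (b c : P) (a : P) :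
    (iso2 M X b c).inv ≫ (ihom (M.obj b)).map (Pi.π (fun k => (below k (X k)).obj c) a) =
      Pi.π _ a := by
  letI : PreservesLimitsOfSize.{0,0} (ihom (M.obj b)) :=
    (ihom.adjunction (M.obj b)).rightAdjoint_preservesLimits
  rw [Iso.inv_comp_eq]
  exact (piComparison_comp_π (ihom (M.obj b)) (fun k => (below k (X k)).obj c) a).symm

lemma psi_fact (N : P ⥤ C) (e : N ≅ ∏ᶜ fun a => below a (X a)) (b a : P) :
    psi M X N e b ≫ (ihom (M.obj b)).map
        (e.hom.app b ≫ (Pi.π (fun c => below c (X c)) a).app b) =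
      cmpP M X a b := by
  rw [psi]
  simp only [Category.assoc, ← Functor.map_comp]
  rw [show (iso1 X b).inv ≫ e.inv.app b ≫ e.hom.app b ≫
        (Pi.π (fun c => below c (X c)) a).app b =
      Pi.π (fun c => (below c (X c)).obj b) a by
    rw [← iso1_fact]; simp]
  rw [iso2_fact]
  simp

lemma cmpP_wedge (a : P) {b c : P} (h : b ⟶ c) :
    cmpP M X a b ≫ (ihom (M.obj b)).map ((below a (X a)).map h) =
      cmpP M X a c ≫ (MonoidalClosed.pre (M.map h)).app ((below a (X a)).obj c) := by
  by_cases hc : c ≤ a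
  · have hb : b ≤ a := (leOfHom h).trans hc
    have hmap : (below a (X a)).map h =
        eqToHom (below_obj_eq hb (X a)) ≫ eqToHom (below_obj_eq hc (X a)).symm := by
      rw [← below_map_eq hc h (X a)]; simp
    have hM : M.map hb.hom = M.map h ≫ M.map hc.hom := by
      rw [← M.map_comp]; congr 1
    rw [cmpP, cmpP, dif_pos hc, dif_pos hb, hmap, hM, MonoidalClosed.pre_map]
    simp only [Functor.map_comp, Category.assoc, eqToHom_map, eqToHom_trans,
      eqToHom_refl, Category.comp_id, NatTrans.comp_app]
    congr 1
    have hn := (MonoidalClosed.pre (M.map h)).naturality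
      (eqToHom (below_obj_eq hc (X a)).symm)
    simp only [eqToHom_map] at hn
    rw [hn]
  · exact ihom_obj_hom_ext (below_obj_isZero hc (X a)) _ _

lemma psi_wedge (N : P ⥤ C) (e : N ≅ ∏ᶜ fun a => below a (X a)) {b c : P} (h : b ⟶ c) :
    psi M X N e b ≫ (ihom (M.obj b)).map (N.map h) =
      psi M X N e c ≫ (MonoidalClosed.pre (M.map h)).app (N.obj c) := by
  haveI : IsIso ((ihom (M.obj b)).map (e.hom.app c ≫ (iso1 X c).hom)) := by
    haveI : IsIso (e.hom.app c ≫ (iso1 X c).hom) := by infer_instance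
    infer_instance
  rw [← cancel_mono ((ihom (M.obj b)).map (e.hom.app c ≫ (iso1 X c).hom) ≫
      (iso2 M X b c).hom)]
  apply Pi.hom_ext
  intro a
  have h2 : (iso2 M X b c).hom ≫ Pi.π _ a =
      (ihom (M.obj b)).map (Pi.π (fun k => (below k (X k)).obj c) a) := by
    rw [← iso2_fact M X b c a]; simp
  have h1 : (iso1 X c).hom ≫ Pi.π (fun k => (below k (X k)).obj c) a =
      (Pi.π (fun k => below k (X k)) a).app c := by
    rw [← iso1_fact X c a]; simp
  simp only [Category.assoc, h2, ← Functor.map_comp, h1]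
  have hnat : N.map h ≫ e.hom.app c ≫ (Pi.π (fun k => below k (X k)) a).app c =
      (e.hom.app b ≫ (Pi.π (fun k => below k (X k)) a).app b) ≫
        (below a (X a)).map h := by
    rw [← Category.assoc, e.hom.naturality h, Category.assoc, Category.assoc]
    congr 1
    exact ((Pi.π (fun k => below k (X k)) a).naturality h)
  rw [hnat, Functor.map_comp, ← Category.assoc, psi_fact]
  rw [← (MonoidalClosed.pre (M.map h)).naturality, ← Category.assoc, psi_fact]
  exact cmpP_wedge M X a h

end Main


/-- For a finite poset `P`, a complete abelian closed symmetric monoidal category `C`,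
a `P`-module `M` and a cofree `P`-module `N ≅ ∏_{a ∈ P} X_a^{↓a}`:
`Hom̲(M, N) ≅ ∏_{a ∈ P} IHom(M a, X_a)`. -/
theorem stmt11 [Fintype P] [Abelian C] [MonoidalCategory C] [SymmetricCategory C]
    [MonoidalClosed C] [HasLimits C] (M N : P ⥤ C) (X : P → C)
    (hN : Nonempty (N ≅ ∏ᶜ fun a => below a (X a))) :
    Nonempty (ehom M N ≅ ∏ᶜ fun a => (ihom (M.obj a)).obj (X a)) := by
  obtain ⟨e⟩ := hN
  refine ⟨⟨fwd M X N e, end_.lift (fun b => psi M X N e b)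
    (fun b c h => psi_wedge M X N e h), ?_, ?_⟩⟩
  · apply end_.hom_ext
    intro b
    change (fwd M X N e ≫ end_.lift (fun b => psi M X N e b)
      (fun b c h => psi_wedge M X N e h)) ≫ end_.π (integrand M N) b = 𝟙 _ ≫ end_.π (integrand M N) b
    rw [Category.assoc]
    erw [end_.lift_π]
    rw [Category.id_comp]
    -- fwd ≫ psi b = π b
    haveI : IsIso ((ihom (M.obj b)).map (e.hom.app b ≫ (iso1 X b).hom)) := by
      haveI : IsIso (e.hom.app b ≫ (iso1 X b).hom) := by infer_instance
      infer_instance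
    change fwd M X N e ≫ psi M X N e b = _
    erw [← cancel_mono ((ihom (M.obj b)).map (e.hom.app b ≫ (iso1 X b).hom) ≫
        (iso2 M X b b).hom)]
    apply Pi.hom_ext
    intro a
    have h2 : (iso2 M X b b).hom ≫ Pi.π _ a =
        (ihom (M.obj b)).map (Pi.π (fun k => (below k (X k)).obj b) a) := by
      rw [← iso2_fact M X b b a]; simp
    have h1 : (iso1 X b).hom ≫ Pi.π (fun k => (below k (X k)).obj b) a =
        (Pi.π (fun k => below k (X k)) a).app b := by
      rw [← iso1_fact X b a]; simp
    simp only [Category.assoc, h2, ← Functor.map_comp, h1]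
    conv_rhs => erw [Category.assoc, Category.assoc, h2, ← Functor.map_comp, Category.assoc, h1]
    rw [psi_fact]
    by_cases hba : b ≤ a
    · rw [cmpP, dif_pos hba]
      have hf : fwd M X N e ≫ Pi.π _ a = end_.π (integrand M N) a ≫
          (ihom (M.obj a)).map (e.hom.app a ≫ (Pi.π (fun c => below c (X c)) a).app a ≫
            eqToHom (below_obj_eq le_rfl (X a))) := by
        rw [fwd]; simp; rfl
      erw [← Category.assoc, hf, Category.assoc]
      have hn := (MonoidalClosed.pre (M.map hba.hom)).naturality
        (e.hom.app a ≫ (Pi.π (fun c => below c (X c)) a).app a ≫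
          eqToHom (below_obj_eq le_rfl (X a)))
      erw [reassoc_of% hn]
      rw [show (MonoidalClosed.pre (M.map hba.hom)).app (N.obj a) =
        ((integrand M N).map hba.hom.op).app a from rfl]
      erw [← end_.condition_assoc]
      rw [show ((integrand M N).obj (op b)).map hba.hom =
        (ihom (M.obj b)).map (N.map hba.hom) from rfl]
      erw [← Functor.map_comp, ← Functor.map_comp]
      congr 1
      have e1 : N.map hba.hom ≫ e.hom.app a =
          e.hom.app b ≫ (∏ᶜ fun c => below c (X c) : P ⥤ C).map hba.hom :=
        e.hom.naturality hba.hom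
      have e2 : (∏ᶜ fun c => below c (X c) : P ⥤ C).map hba.hom ≫
          (Pi.π (fun c => below c (X c)) a).app a =
          (Pi.π (fun c => below c (X c)) a).app b ≫ (below a (X a)).map hba.hom :=
        (Pi.π (fun c => below c (X c)) a).naturality hba.hom
      have e3 : (below a (X a)).map hba.hom ≫ eqToHom (below_obj_eq le_rfl (X a)) =
          eqToHom (below_obj_eq hba (X a)) := below_map_eq le_rfl hba.hom (X a)
      congr 1
      simp only [Category.assoc]
      rw [reassoc_of% e1, reassoc_of% e2, reassoc_of% e3, eqToHom_trans, eqToHom_refl,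
        Category.comp_id]
    · exact ihom_obj_hom_ext (below_obj_isZero hba (X a)) _ _
  · apply Pi.hom_ext
    intro a
    change (end_.lift (fun b => psi M X N e b) (fun b c h => psi_wedge M X N e h) ≫
      fwd M X N e) ≫ Pi.π _ a = 𝟙 _ ≫ Pi.π _ a
    erw [Category.assoc, Category.id_comp]
    have hf : fwd M X N e ≫ Pi.π _ a = end_.π (integrand M N) a ≫
        (ihom (M.obj a)).map (e.hom.app a ≫ (Pi.π (fun c => below c (X c)) a).app a ≫
          eqToHom (below_obj_eq le_rfl (X a))) := by
      rw [fwd]; simp; rfl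
    erw [hf, ← Category.assoc, end_.lift_π]
    rw [show (ihom (M.obj a)).map (e.hom.app a ≫ (Pi.π (fun c => below c (X c)) a).app a ≫
          eqToHom (below_obj_eq le_rfl (X a))) =
        (ihom (M.obj a)).map (e.hom.app a ≫ (Pi.π (fun c => below c (X c)) a).app a) ≫
          (ihom (M.obj a)).map (eqToHom (below_obj_eq le_rfl (X a))) by
      rw [← Functor.map_comp, Category.assoc]]
    change psi M X N e a ≫ _ = _
    rw [← Category.assoc, psi_fact, cmpP, dif_pos le_rfl]
    simp [eqToHom_map, homOfLE_refl, MonoidalClosed.pre_id]
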